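/- arXiv:1705.08930 — 2 statements merged into one kernel-verified Lean document; each statement's English description precedes it below -/
import Mathlib

section
/- Let Γ̂ : ℝ^p → ℝ be a convex differentiable function, let θ̃ ∈ ℝ^p with support S̃ of cardinality s̃, and let λ > 0 satisfy 2‖∇Γ̂(θ̃)‖_∞ ≤ λ. Suppose θ̂ minimizes θ ↦ Γ̂(θ) + λ‖θ‖₁. Then the error Δ = θ̂ − θ̃ lies in the cone C = {Δ : ‖Δ_{S̃ᶜ}‖₁ ≤ 3‖Δ_{S̃}‖₁}. -/
open Finset InnerProductSpace

-- first-order condition for convex functions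
lemma convex_grad_ineq {F : Type*} [NormedAddCommGroup F] [InnerProductSpace ℝ F]
    [CompleteSpace F] {Γ : F → ℝ} {G x y : F}
    (hconv : ConvexOn ℝ Set.univ Γ) (hgrad : HasGradientAt Γ G x) :
    Γ x + ⟪G, y - x⟫_ℝ ≤ Γ y := by
  set g : ℝ → ℝ := fun t => Γ (x + t • (y - x)) with hg
  have hline : HasDerivAt (fun t : ℝ => x + t • (y - x)) (y - x) 0 := by
    simpa using ((hasDerivAt_id (0:ℝ)).smul_const (y - x)).const_add x
  have hD : HasDerivAt g (⟪G, y - x⟫_ℝ) 0 := by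
    have hF : HasFDerivAt Γ (InnerProductSpace.toDual ℝ F G) (x + (0:ℝ) • (y - x)) := by
      simpa using hgrad.hasFDerivAt
    have := hF.comp_hasDerivAt 0 hline
    exact this
  -- slope bound on (0,1]
  have hslope : ∀ t ∈ Set.Ioc (0:ℝ) 1, slope g 0 t ≤ Γ y - Γ x := by
    intro t ht
    have hcomb := hconv.2 (Set.mem_univ x) (Set.mem_univ y)
      (by linarith [ht.2] : (0:ℝ) ≤ 1 - t) (le_of_lt ht.1) (by ring)
    have : g t ≤ (1 - t) * Γ x + t * Γ y := by
      have hx : (1 - t) • x + t • y = x + t • (y - x) := by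
        simp [smul_sub, sub_smul]; abel
      simpa [g, hx, smul_eq_mul] using hcomb
    have hg0 : g 0 = Γ x := by simp [g]
    rw [slope_def_field, hg0, div_le_iff₀ (by simpa using ht.1)]
    nlinarith [ht.1]
  have htends : Filter.Tendsto (slope g 0) (nhdsWithin 0 (Set.Ioi 0))
      (nhds (⟪G, y - x⟫_ℝ)) := by
    have := hD.hasDerivWithinAt (s := Set.Ioi 0)
    have h2 := (hasDerivWithinAt_iff_tendsto_slope.mp this)
    have hsub : nhdsWithin (0:ℝ) (Set.Ioi 0 \ {0}) = nhdsWithin 0 (Set.Ioi 0) := by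
      congr 1
      ext t; simp (config := {contextual := true}) [ne_of_gt]
    simpa [hsub] using h2
  have hle : ⟪G, y - x⟫_ℝ ≤ Γ y - Γ x := by
    refine le_of_tendsto htends ?_
    filter_upwards [Ioc_mem_nhdsGT_of_mem (by simp : (0:ℝ) ∈ Set.Ico (0:ℝ) 1)] with t ht
    exact hslope t ht
  linarith

/-- the lasso error lies in the cone. -/
theorem stmt_0 {p : ℕ} (Γ : EuclideanSpace ℝ (Fin p) → ℝ)
    (G θt θh : EuclideanSpace ℝ (Fin p)) (S : Finset (Fin p)) (lam : ℝ)
    (hconv : ConvexOn ℝ Set.univ Γ) (hdiff : Differentiable ℝ Γ)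
    (hgrad : HasGradientAt Γ G θt)
    (hsupp : ∀ k, k ∉ S → θt k = 0)
    (hlam : 0 < lam)
    (hpert : ∀ k, 2 * |G k| ≤ lam)
    (hmin : ∀ θ : EuclideanSpace ℝ (Fin p),
      Γ θh + lam * ∑ k, |θh k| ≤ Γ θ + lam * ∑ k, |θ k|) :
    ∑ k ∈ Sᶜ, |θh k - θt k| ≤ 3 * ∑ k ∈ S, |θh k - θt k| := by
  set A := ∑ k ∈ S, |θh k - θt k| with hA
  set B := ∑ k ∈ Sᶜ, |θh k - θt k| with hB
  set T := ∑ k ∈ S, |θh k| with hT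
  set U := ∑ k ∈ S, |θt k| with hU
  have hgi := convex_grad_ineq hconv hgrad (y := θh)
  have hinner : ⟪G, θh - θt⟫_ℝ = ∑ k, G k * (θh k - θt k) := by
    simp [PiLp.inner_apply, RCLike.inner_apply, PiLp.sub_apply, mul_comm]
  have habs : ∀ k, -(G k * (θh k - θt k)) ≤ (lam/2) * |θh k - θt k| := by
    intro k
    calc -(G k * (θh k - θt k)) ≤ |G k * (θh k - θt k)| := neg_le_abs _
      _ = |G k| * |θh k - θt k| := abs_mul _ _
      _ ≤ (lam/2) * |θh k - θt k| :=
        mul_le_mul_of_nonneg_right (by linarith [hpert k]) (abs_nonneg _)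
  have hinb : -⟪G, θh - θt⟫_ℝ ≤ (lam/2) * ∑ k, |θh k - θt k| := by
    rw [hinner, ← Finset.sum_neg_distrib, Finset.mul_sum]
    exact Finset.sum_le_sum fun k _ => habs k
  have key1 : lam * ∑ k, |θh k| ≤ lam * ∑ k, |θt k| + (lam/2) * ∑ k, |θh k - θt k| := by
    have := hmin θt
    linarith [hgi, hinb]
  have hsplit1 : ∑ k, |θh k| = T + B := by
    rw [hT, hB, ← Finset.sum_add_sum_compl S fun k => |θh k|]
    congr 1
    exact Finset.sum_congr rfl fun k hk => by
      rw [hsupp k (Finset.mem_compl.mp hk), sub_zero]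
  have hsplit2 : ∑ k, |θt k| = U := by
    rw [hU, ← Finset.sum_add_sum_compl S fun k => |θt k|]
    have : ∑ k ∈ Sᶜ, |θt k| = 0 :=
      Finset.sum_eq_zero fun k hk => by rw [hsupp k (Finset.mem_compl.mp hk), abs_zero]
    rw [this, add_zero]
  have hsplit3 : ∑ k, |θh k - θt k| = A + B := by
    rw [hA, hB, ← Finset.sum_add_sum_compl S fun k => |θh k - θt k|]
  have htri : U ≤ T + A := by
    rw [hU, hT, hA, ← Finset.sum_add_distrib]
    exact Finset.sum_le_sum fun k _ => by
      have := abs_sub_abs_le_abs_sub (θt k) (θh k)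
      rw [abs_sub_comm] at this
      linarith
  have hU' : lam * U ≤ lam * (T + A) := mul_le_mul_of_nonneg_left htri hlam.le
  rw [hsplit1, hsplit2, hsplit3] at key1
  have hfin : lam * B ≤ lam * (3 * A) := by nlinarith
  exact le_of_mul_le_mul_left hfin hlam
end

section
/- Let Γ̂ : ℝ^p → ℝ be convex and differentiable, θ̃ ∈ ℝ^p with support S̃, |S̃| = s̃, and λ > 0 with 2‖∇Γ̂(θ̃)‖_∞ ≤ λ. Suppose the first-order Taylor error δΓ̂(Δ) = Γ̂(θ̃+Δ) − Γ̂(θ̃) − ⟨∇Γ̂(θ̃), Δ⟩ satisfies δΓ̂(Δ) ≥ κ‖Δ‖₂² for all Δ in the cone C = {Δ : ‖Δ_{S̃ᶜ}‖₁ ≤ 3‖Δ_{S̃}‖₁} with ‖Δ‖₂ ≤ r, for some κ > 0. If λ ≤ κ r /(3√s̃) and θ̂ minimizes Γ̂(θ) + λ‖θ‖₁, then ‖θ̂ − θ̃‖₂² ≤ 9 s̃ λ² / κ². -/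
open Finset

/-- Convexity gradient inequality. -/
theorem grad_ineq {p : ℕ} (Γ : EuclideanSpace ℝ (Fin p) → ℝ)
    (G θt θh : EuclideanSpace ℝ (Fin p))
    (hconv : ConvexOn ℝ Set.univ Γ) (hgrad : HasGradientAt Γ G θt) :
    (inner ℝ G (θh - θt) : ℝ) ≤ Γ θh - Γ θt := by
  set Δ := θh - θt with hΔdef
  set φ : ℝ → ℝ := Γ ∘ (AffineMap.lineMap θt θh) with hφ
  have hφconv : ConvexOn ℝ Set.univ φ := by
    have := hconv.comp_affineMap (AffineMap.lineMap θt θh)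
    simpa using this
  have hline : HasDerivAt (fun t : ℝ => (AffineMap.lineMap θt θh : ℝ → _) t) Δ 0 := by
    simp only [AffineMap.lineMap_apply_module]
    have h1 : HasDerivAt (fun t : ℝ => t • Δ + θt) ((1:ℝ) • Δ) 0 :=
      ((hasDerivAt_id (0:ℝ)).smul_const Δ).add_const θt
    have hfun : (fun t : ℝ => (1 - t) • θt + t • θh) = fun t : ℝ => t • Δ + θt := by
      funext t; rw [hΔdef]; module
    rw [hfun]; simpa using h1
  have hd : HasDerivAt φ (inner ℝ G Δ : ℝ) 0 := by
    have hF : HasFDerivAt Γ (InnerProductSpace.toDual ℝ _ G)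
        ((AffineMap.lineMap θt θh : ℝ → _) 0) := by simpa using hgrad.hasFDerivAt
    have := hF.comp_hasDerivAt (0:ℝ) hline
    simpa [hφ, InnerProductSpace.toDual_apply_apply] using this
  have := hφconv.le_slope_of_hasDerivAt (Set.mem_univ 0) (Set.mem_univ 1) one_pos hd
  rw [slope_def_field] at this
  simpa [hφ] using this

theorem aux_case1 {κ lam q n s : ℝ} (hκ : 0 < κ) (hlam : 0 < lam) (hn : 0 ≤ n) (hq : 0 ≤ q)
    (hqs : q * q = s) (hkey : κ * n ^ 2 ≤ 3 / 2 * lam * q * n) :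
    n ^ 2 ≤ 9 * s * lam ^ 2 / κ ^ 2 := by
  have hc : 0 ≤ 3 / 2 * lam * q := by positivity
  have hkn : κ * n ≤ 3 / 2 * lam * q := by
    rcases hn.eq_or_lt with h0 | h0
    · rw [← h0, mul_zero]; exact hc
    · have h2 : κ * n * n ≤ 3 / 2 * lam * q * n := by nlinarith [hkey]
      exact le_of_mul_le_mul_right h2 h0
  have hsq := mul_self_le_mul_self (mul_nonneg hκ.le hn) hkn
  have hs0 : 0 ≤ s := hqs ▸ mul_self_nonneg q
  rw [le_div_iff₀ (by positivity : (0:ℝ) < κ ^ 2)]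
  nlinarith [hsq, hqs, mul_nonneg (mul_nonneg hlam.le hlam.le) hs0]

theorem aux_case2 {κ lam q r : ℝ} (hlam : 0 < lam) (hr : 0 < r) (hq : 1 ≤ q)
    (h1 : lam * (3 * q) ≤ κ * r) (h2 : κ * r ^ 2 ≤ 3 / 2 * lam * q * r) : False := by
  have hkr : κ * r ≤ 3 / 2 * lam * q := by
    have h3 : κ * r * r ≤ 3 / 2 * lam * q * r := by nlinarith [h2]
    exact le_of_mul_le_mul_right h3 hr
  nlinarith [mul_pos hlam (lt_of_lt_of_le one_pos hq)]

/-- deterministic oracle inequality for ℓ₁-regularized M-estimation. -/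
theorem stmt_1 {p : ℕ} (Γ : EuclideanSpace ℝ (Fin p) → ℝ)
    (G θt θh : EuclideanSpace ℝ (Fin p)) (S : Finset (Fin p)) (lam κ r : ℝ)
    (hconv : ConvexOn ℝ Set.univ Γ) (hdiff : Differentiable ℝ Γ)
    (hgrad : HasGradientAt Γ G θt)
    (hsupp : ∀ k, k ∉ S → θt k = 0)
    (hlam : 0 < lam) (hκ : 0 < κ) (hr : 0 < r)
    (hpert : ∀ k, 2 * |G k| ≤ lam)
    (hRSC : ∀ Δ : EuclideanSpace ℝ (Fin p),
      (∑ k ∈ Sᶜ, |Δ k| ≤ 3 * ∑ k ∈ S, |Δ k|) → ‖Δ‖ ≤ r →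
      κ * ‖Δ‖ ^ 2 ≤ Γ (θt + Δ) - Γ θt - (inner ℝ G Δ : ℝ))
    (hlam2 : lam ≤ κ * r / (3 * Real.sqrt S.card))
    (hmin : ∀ θ : EuclideanSpace ℝ (Fin p),
      Γ θh + lam * ∑ k, |θh k| ≤ Γ θ + lam * ∑ k, |θ k|) :
    ‖θh - θt‖ ^ 2 ≤ 9 * S.card * lam ^ 2 / κ ^ 2 := by
  set Δ : EuclideanSpace ℝ (Fin p) := θh - θt with hΔdef
  have hΔk : ∀ k, Δ k = θh k - θt k := fun k => rfl
  have hθtΔ : θt + Δ = θh := by rw [hΔdef]; abel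
  set a : ℝ := ∑ k ∈ S, |Δ k| with ha_def
  set b : ℝ := ∑ k ∈ Sᶜ, |Δ k| with hb_def
  set n : ℝ := ‖Δ‖ with hn_def
  set ip : ℝ := (inner ℝ G Δ : ℝ) with hip_def
  set s : ℝ := (S.card : ℝ) with hs_def
  have ha0 : 0 ≤ a := Finset.sum_nonneg fun k _ => abs_nonneg _
  have hb0 : 0 ≤ b := Finset.sum_nonneg fun k _ => abs_nonneg _
  have hn0 : 0 ≤ n := norm_nonneg _
  clear_value Δ a b n ip s
  -- ℓ1 norm splits
  have hsplit : ∑ k, |Δ k| = a + b := by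
    rw [ha_def, hb_def]; exact (Finset.sum_add_sum_compl S _).symm
  -- |ip| ≤ (lam/2)(a+b)
  have hip_bound : |ip| ≤ lam / 2 * (a + b) := by
    have h1 : ip = ∑ k, G k * Δ k := by
      rw [hip_def]; simp [PiLp.inner_apply, RCLike.inner_apply, conj_trivial, mul_comm]
    calc |ip| ≤ ∑ k, |G k * Δ k| := h1 ▸ Finset.abs_sum_le_sum_abs _ _
      _ ≤ ∑ k, lam / 2 * |Δ k| := by
          refine Finset.sum_le_sum fun k _ => ?_
          rw [abs_mul]
          exact mul_le_mul_of_nonneg_right (by linarith [hpert k]) (abs_nonneg _)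
      _ = lam / 2 * (a + b) := by rw [← Finset.mul_sum, hsplit]
  -- gradient inequality
  have hgi : ip ≤ Γ θh - Γ θt := by
    rw [hip_def, hΔdef]; exact grad_ineq Γ G θt θh hconv hgrad
  -- minimality
  have hmin' : Γ θh - Γ θt ≤ lam * (a - b) := by
    have h1 := hmin θt
    have h2 : ∑ k, |θt k| - ∑ k, |θh k| ≤ a - b := by
      rw [← Finset.sum_sub_distrib]
      have h3 : ∑ k, (|θt k| - |θh k|) =
          ∑ k ∈ S, (|θt k| - |θh k|) + ∑ k ∈ Sᶜ, (|θt k| - |θh k|) :=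
        (Finset.sum_add_sum_compl S _).symm
      rw [h3]
      have h4 : ∑ k ∈ S, (|θt k| - |θh k|) ≤ a := by
        rw [ha_def]
        refine Finset.sum_le_sum fun k _ => ?_
        have := abs_sub_abs_le_abs_sub (θt k) (θh k)
        have : |θt k - θh k| = |Δ k| := by rw [hΔk k, abs_sub_comm]
        calc |θt k| - |θh k| ≤ |θt k - θh k| := abs_sub_abs_le_abs_sub _ _
          _ = |Δ k| := this
      have h5 : ∑ k ∈ Sᶜ, (|θt k| - |θh k|) = -b := by
        rw [hb_def, ← Finset.sum_neg_distrib]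
        refine Finset.sum_congr rfl fun k hk => ?_
        have hz := hsupp k (Finset.mem_compl.mp hk)
        rw [hΔk k, hz]; simp
      rw [h5]; linarith
    nlinarith [h1, mul_le_mul_of_nonneg_left h2 hlam.le]
  -- cone condition
  have hcone : b ≤ 3 * a := by
    have h1 : -(lam / 2 * (a + b)) ≤ ip := neg_le_of_abs_le hip_bound
    nlinarith
  -- upper bound on first-order Taylor error
  have hU : Γ θh - Γ θt - ip ≤ 3 / 2 * lam * a := by
    have h1 : -(lam / 2 * (a + b)) ≤ ip := neg_le_of_abs_le hip_bound
    nlinarith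
  -- Cauchy-Schwarz: a ≤ √s * n
  have hn2 : n ^ 2 = ∑ k, |Δ k| ^ 2 := by
    rw [hn_def, EuclideanSpace.norm_eq, Real.sq_sqrt (by positivity)]
    simp [Real.norm_eq_abs]
  have ha2 : a ^ 2 ≤ s * n ^ 2 := by
    rw [ha_def, hs_def, hn2]
    have h2 : ∑ k ∈ S, |Δ k| ^ 2 ≤ ∑ k, |Δ k| ^ 2 :=
      Finset.sum_le_sum_of_subset_of_nonneg (Finset.subset_univ S)
        (fun k _ _ => by positivity)
    calc (∑ k ∈ S, |Δ k|) ^ 2 ≤ (S.card : ℝ) * ∑ k ∈ S, |Δ k| ^ 2 :=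
          sq_sum_le_card_mul_sum_sq
      _ ≤ (S.card : ℝ) * ∑ k, |Δ k| ^ 2 :=
          mul_le_mul_of_nonneg_left h2 (Nat.cast_nonneg _)
  have hsq0 : 0 ≤ Real.sqrt s := Real.sqrt_nonneg _
  have haCS : a ≤ Real.sqrt s * n := by
    have := Real.sqrt_le_sqrt ha2
    rwa [Real.sqrt_sq ha0, Real.sqrt_mul (by rw [hs_def]; positivity), Real.sqrt_sq hn0] at this
  -- S is nonempty
  have hS1 : 1 ≤ Real.sqrt s := by
    rcases Nat.eq_zero_or_pos S.card with h | h
    · exfalso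
      rw [hs_def] at hlam2
      rw [h] at hlam2
      simp at hlam2
      linarith
    · have : (1 : ℝ) ≤ s := by rw [hs_def]; exact_mod_cast h
      calc (1:ℝ) = Real.sqrt 1 := Real.sqrt_one.symm
        _ ≤ Real.sqrt s := Real.sqrt_le_sqrt this
  have hsqpos : 0 < 3 * Real.sqrt s := by positivity
  have hlam2' : lam * (3 * Real.sqrt s) ≤ κ * r := by
    calc lam * (3 * Real.sqrt s) ≤ κ * r / (3 * Real.sqrt s) * (3 * Real.sqrt s) :=
          mul_le_mul_of_nonneg_right hlam2 hsqpos.le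
      _ = κ * r := div_mul_cancel₀ _ hsqpos.ne'
  rcases le_or_gt n r with hcase | hcase
  · -- in the ball
    have hrsc := hRSC Δ (by rw [← hb_def, ← ha_def]; exact hcone) (by rwa [hn_def] at hcase)
    rw [hθtΔ, ← hn_def, ← hip_def] at hrsc
    have hkey : κ * n ^ 2 ≤ 3 / 2 * lam * Real.sqrt s * n := by
      calc κ * n ^ 2 ≤ Γ θh - Γ θt - ip := hrsc
        _ ≤ 3 / 2 * lam * a := hU
        _ ≤ 3 / 2 * lam * (Real.sqrt s * n) :=
            mul_le_mul_of_nonneg_left haCS (by positivity)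
        _ = 3 / 2 * lam * Real.sqrt s * n := by ring
    have hss : Real.sqrt s * Real.sqrt s = s := Real.mul_self_sqrt (by rw [hs_def]; positivity)
    exact aux_case1 hκ hlam hn0 hsq0 hss hkey
  · -- outside the ball: contradiction
    exfalso
    have hnpos : 0 < n := lt_trans hr hcase
    set t : ℝ := r / n with ht_def
    have ht0 : 0 < t := div_pos hr hnpos
    have ht1 : t < 1 := (div_lt_one hnpos).mpr hcase
    have htn : t * n = r := div_mul_cancel₀ r (ne_of_gt hnpos)
    set Δ' : EuclideanSpace ℝ (Fin p) := t • Δ with hΔ'def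
    have hΔ'k : ∀ k, Δ' k = t * Δ k := fun k => rfl
    clear_value Δ'
    have hΔ'norm : ‖Δ'‖ = r := by
      rw [hΔ'def, norm_smul, Real.norm_eq_abs, abs_of_pos ht0, ← hn_def, htn]
    have hconeΔ' : ∑ k ∈ Sᶜ, |Δ' k| ≤ 3 * ∑ k ∈ S, |Δ' k| := by
      have e1 : ∑ k ∈ Sᶜ, |Δ' k| = t * b := by
        rw [hb_def, Finset.mul_sum]
        exact Finset.sum_congr rfl fun k _ => by
          rw [hΔ'k k, abs_mul, abs_of_pos ht0]
      have e2 : ∑ k ∈ S, |Δ' k| = t * a := by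
        rw [ha_def, Finset.mul_sum]
        exact Finset.sum_congr rfl fun k _ => by
          rw [hΔ'k k, abs_mul, abs_of_pos ht0]
      rw [e1, e2]
      calc t * b ≤ t * (3 * a) := mul_le_mul_of_nonneg_left hcone ht0.le
        _ = 3 * (t * a) := by ring
    have hrsc := hRSC Δ' hconeΔ' (le_of_eq hΔ'norm)
    rw [hΔ'norm] at hrsc
    have hip' : (inner ℝ G Δ' : ℝ) = t * ip := by
      rw [hΔ'def, hip_def]; exact real_inner_smul_right G Δ t
    have hconv' : Γ (θt + Δ') ≤ (1 - t) * Γ θt + t * Γ θh := by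
      have h := hconv.2 (Set.mem_univ θt) (Set.mem_univ θh)
        (by linarith : (0:ℝ) ≤ 1 - t) (le_of_lt ht0) (by ring)
      have heq : (1 - t) • θt + t • θh = θt + Δ' := by
        rw [hΔ'def, hΔdef]; module
      rw [heq] at h
      simpa [smul_eq_mul] using h
    have hchain : κ * r ^ 2 ≤ t * (Γ θh - Γ θt - ip) := by
      rw [hip'] at hrsc
      calc κ * r ^ 2 ≤ Γ (θt + Δ') - Γ θt - t * ip := hrsc
        _ ≤ (1 - t) * Γ θt + t * Γ θh - Γ θt - t * ip := by linarith
        _ = t * (Γ θh - Γ θt - ip) := by ring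
    have hfinal : κ * r ^ 2 ≤ 3 / 2 * lam * Real.sqrt s * r := by
      calc κ * r ^ 2 ≤ t * (Γ θh - Γ θt - ip) := hchain
        _ ≤ t * (3 / 2 * lam * (Real.sqrt s * n)) := by
            have h2 : Γ θh - Γ θt - ip ≤ 3 / 2 * lam * (Real.sqrt s * n) :=
              le_trans hU (mul_le_mul_of_nonneg_left haCS (by positivity))
            exact mul_le_mul_of_nonneg_left h2 (le_of_lt ht0)
        _ = 3 / 2 * lam * Real.sqrt s * (t * n) := by ring
        _ = 3 / 2 * lam * Real.sqrt s * r := by rw [htn]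
    exact aux_case2 hlam hr hS1 hlam2' hfinal
end
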